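/- A subring R of a field K with field of fractions K can be represented as an intersection of valuation rings of K if and only if R is integrally closed in K (Krull's Fundamentalsatz). -/

import Mathlib

open Polynomial

-- forward helper: valuation subrings are integrally closed in K
set_option synthInstance.maxHeartbeats 1000000 in
lemma val_closed {K : Type} [Field K] (V : ValuationSubring K) {a : K}
    (ha : IsIntegral V.toSubring a) : a ∈ V := by
  letI : IsIntegrallyClosed V := inferInstance
  obtain ⟨b, hb⟩ := (IsIntegrallyClosed.isIntegral_iff (R := V) (K := K)).mp ha
  exact hb ▸ b.2

-- backward helper: if x not integral over R, find valuation subring containing R missing x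
lemma exists_val_not_mem {K : Type} [Field K] (R : Subring K) {x : K}
    (hx : ¬ IsIntegral R x) (hx0 : x ≠ 0) :
    ∃ V : ValuationSubring K, (R : Set K) ⊆ V.toSubring ∧ x ∉ V.toSubring := by
  set y := x⁻¹ with hy
  set A : Subring K := (Algebra.adjoin R {y}).toSubring with hA
  have hyA : y ∈ A := Algebra.self_mem_adjoin_singleton R y
  have hRA : (R : Set K) ⊆ A := fun r hr => Subalgebra.algebraMap_mem _ (⟨r, hr⟩ : R)
  -- the ideal generated by y in A is proper
  have hne : Ideal.span {(⟨y, hyA⟩ : A)} ≠ ⊤ := by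
    intro htop
    apply hx
    have h1 : (1 : A) ∈ Ideal.span {(⟨y, hyA⟩ : A)} := htop ▸ Submodule.mem_top
    obtain ⟨c, hc⟩ := Ideal.mem_span_singleton'.mp h1
    -- c ∈ adjoin R {y}, so c = aeval y p
    have hcA : (c : K) ∈ Algebra.adjoin R {y} := c.2
    rw [Algebra.adjoin_singleton_eq_range_aeval] at hcA
    obtain ⟨p, hp⟩ := hcA
    -- q := p * X - 1 vanishes at y
    have hq : Polynomial.eval₂ (algebraMap R K) y (p * X - 1) = 0 := by
      have h1' : (c : K) * y = 1 := congrArg Subtype.val hc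
      rw [eval₂_sub, eval₂_mul, eval₂_X, eval₂_one, sub_eq_zero]
      calc Polynomial.eval₂ (algebraMap R K) y p * y = (c : K) * y := by
            rw [← hp]; rfl
        _ = 1 := h1'
    set q : R[X] := p * X - 1 with hqdef
    have hinv : Invertible y := (isUnit_iff_ne_zero.mpr (inv_ne_zero hx0)).invertible
    have hrev : Polynomial.eval₂ (algebraMap R K) (⅟ y) q.reverse = 0 :=
      (Polynomial.eval₂_reverse_eq_zero_iff _ y q).mpr hq
    have hyx : (⅟ y) = x :=
      invOf_eq_right_inv (by rw [hy]; exact inv_mul_cancel₀ hx0)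
    rw [hyx] at hrev
    -- -(reverse q) is monic
    have hq0 : q.coeff 0 = -1 := by simp [hqdef, coeff_mul_X]
    have htd : q.natTrailingDegree = 0 := by
      rw [Polynomial.natTrailingDegree_eq_zero]
      exact Or.inr (by rw [hq0]; exact neg_ne_zero.mpr one_ne_zero)
    have hlead : q.reverse.leadingCoeff = -1 := by
      rw [Polynomial.reverse_leadingCoeff, Polynomial.trailingCoeff, htd, hq0]
    refine ⟨-q.reverse, ?_, ?_⟩
    · rw [Polynomial.Monic, Polynomial.leadingCoeff_neg, hlead, neg_neg]
    · rw [eval₂_neg, hrev, neg_zero]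
  -- pick a maximal ideal over it
  obtain ⟨m, hm, hsub⟩ := Ideal.exists_le_maximal _ hne
  haveI := hm.isPrime
  set L := LocalSubring.ofPrime A m with hL
  obtain ⟨V, hV⟩ := L.exists_le_valuationSubring
  refine ⟨V, ?_, ?_⟩
  · exact fun r hr => hV.1 (LocalSubring.le_ofPrime A m (hRA hr))
  · intro hxV
    -- y maps to a nonunit of L
    have hyL : ¬ IsUnit (algebraMap A L.toSubring ⟨y, hyA⟩) := by
      rw [IsLocalization.AtPrime.isUnit_to_map_iff L.toSubring m]
      exact fun h => h (hsub (Ideal.mem_span_singleton_self _))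
    -- but y is a unit in V
    have hyV : y ∈ V.toSubring := hV.1 (LocalSubring.le_ofPrime A m hyA)
    have hyu : IsUnit (⟨y, hyV⟩ : V.toSubring) := by
      refine IsUnit.of_mul_eq_one ⟨x, hxV⟩ ?_
      exact Subtype.ext (by simp [hy, inv_mul_cancel₀ hx0])
    have heq : (Subring.inclusion hV.1) (algebraMap A L.toSubring ⟨y, hyA⟩)
        = (⟨y, hyV⟩ : V.toSubring) := rfl
    haveI := hV.2
    exact hyL (IsUnit.of_map (Subring.inclusion hV.1) _ (heq ▸ hyu))

/-- Krull's Fundamentalsatz: A subring R of a field K whose field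
of fractions is K is an intersection of valuation rings of K iff R is
integrally closed in K. -/
theorem stmt_6 (K : Type) [Field K] (R : Subring K)
    (hfrac : ∀ x : K, ∃ a ∈ R, ∃ b ∈ R, b ≠ 0 ∧ x = a / b) :
    (∃ S : Set (Subring K),
        (∀ B ∈ S, ∀ a : K, a ≠ 0 → a ∈ B ∨ a⁻¹ ∈ B) ∧
        (R : Set K) = ⋂ B ∈ S, (B : Set K)) ↔
    (∀ a : K, IsIntegral R a → a ∈ R) := by
  constructor
  · rintro ⟨S, hval, hR⟩ a ha
    have : a ∈ ⋂ B ∈ S, (B : Set K) := by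
      refine Set.mem_iInter₂.mpr fun B hB => ?_
      have hvB : ∀ x : K, x ∈ B ∨ x⁻¹ ∈ B := fun x => by
        rcases eq_or_ne x 0 with rfl | hx
        · exact Or.inl (zero_mem B)
        · exact hval B hB x hx
      let V : ValuationSubring K := ⟨B, hvB⟩
      have hRB : (R : Set K) ⊆ B := by
        rw [hR]; exact Set.biInter_subset_of_mem hB
      have haV : IsIntegral V.toSubring a := by
        obtain ⟨p, hp, hpa⟩ := ha
        refine ⟨p.map (Subring.inclusion (fun x hx => hRB hx)), hp.map _, ?_⟩
        rw [Polynomial.eval₂_map]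
        exact hpa
      exact val_closed V haV
    rwa [← hR] at this
  · intro hint
    refine ⟨{B | ∃ V : ValuationSubring K, V.toSubring = B ∧ (R : Set K) ⊆ B}, ?_, ?_⟩
    · rintro B ⟨V, rfl, -⟩ a ha
      exact V.mem_or_inv_mem a
    · apply Set.Subset.antisymm
      · intro r hr
        refine Set.mem_iInter₂.mpr fun B hB => ?_
        obtain ⟨V, rfl, hRB⟩ := hB
        exact hRB hr
      · intro x hx
        by_contra hxR
        have hx0 : x ≠ 0 := fun h => hxR (h ▸ zero_mem R)
        have hxint : ¬ IsIntegral R x := fun h => hxR (hint x h)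
        obtain ⟨V, hRV, hxV⟩ := exists_val_not_mem R hxint hx0
        exact hxV (Set.mem_iInter₂.mp hx V.toSubring ⟨V, rfl, hRV⟩)
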